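/- Let 0<q<1, 0 ≤ α ≤ β, n ≥ 1, m ≥ 1, φ : ℝ → ℝ and x ≥ 0. Assume w_k(x) ≥ 0 for all k ≥ 0, ∑_{k=0}^∞ w_k(x) = 1, ∑_{k=0}^∞ w_k(x)·([k]_q + q^{k-1}α)/(q^{k-1}([n]_q + β)) = [n]_q x/([n]_q + β) + α/([n]_q + β), and ∑_{k=0}^∞ w_k(x)·(([k]_q + q^{k-1}α)/(q^{k-1}([n]_q + β)))² = [n]_q [m]_q x²/(q([n]_q + β)²) + [n]_q (2α + 1) x/([n]_q + β)² + α²/([n]_q + β)², all series converging. Then L*_n(e_2; q, x) = [n]_q [m]_q x²/(q([n]_q + β)²) + [n]_q ([3]_q + q((1 + 3α)[2]_q + 1)) x/([3]_q ([n]_q + β)²) + q²(1 + 3α + 3α²)/([3]_q ([n]_q + β)²), where e_2(t) = t². -/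

import Mathlib

open scoped BigOperators

noncomputable section

/-- The `q`-integer `[n]_q = ∑_{i=0}^{n-1} q^i`. -/
def qInt (q : ℝ) (n : ℕ) : ℝ := ∑ i ∈ Finset.range n, q ^ i

/-- The `q`-factorial `[n]_q! = ∏_{j=1}^{n} [j]_q`. -/
def qFact (q : ℝ) (n : ℕ) : ℝ := ∏ j ∈ Finset.range n, qInt q (j + 1)

/-- The `q`-Jackson integral `∫_0^c g(t) d_q t = (1-q) c ∑_{j=0}^∞ q^j g (c q^j)`. -/
def jackson0 (q c : ℝ) (g : ℝ → ℝ) : ℝ := (1 - q) * c * ∑' j : ℕ, q ^ j * g (c * q ^ j)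

/-- The `q`-Jackson integral `∫_a^b g(t) d_q t`. -/
def jackson (q a b : ℝ) (g : ℝ → ℝ) : ℝ := jackson0 q b g - jackson0 q a g

/-- The `q`-derivative operator, with the convention `(D_q g)(0) = 0`. -/
def qD (q : ℝ) (g : ℝ → ℝ) : ℝ → ℝ := fun x =>
  if x = 0 then 0 else (g x - g (q * x)) / ((1 - q) * x)

/-- The weights `w_k(x) = q^{k(k-1)/2} (D_q^k φ)(x) (−x)^k / [k]_q!`. -/
def w (q : ℝ) (φ : ℝ → ℝ) (k : ℕ) (x : ℝ) : ℝ :=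
  q ^ (k * (k - 1) / 2) * ((qD q)^[k] φ) x * (-x) ^ k / qFact q k

/-- Lower node `a_k = q([k]_q + q^{k-1} α)/([n]_q + β)`. -/
def aNode (q α β : ℝ) (n k : ℕ) : ℝ :=
  q * (qInt q k + q ^ ((k : ℤ) - 1) * α) / (qInt q n + β)

/-- Upper node `b_k = ([k+1]_q + q^k α)/([n]_q + β)`. -/
def bNode (q α β : ℝ) (n k : ℕ) : ℝ :=
  (qInt q (k + 1) + q ^ k * α) / (qInt q n + β)

/-- The Stancu type `q`-Baskakov–Kantorovich operator
`L*_n(f; q, x) = ([n]_q + β) ∑_{k=0}^∞ w_k(x) ∫_{a_k}^{b_k} f(q^{1-k} t) d_q t`. -/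
def Lop (q α β : ℝ) (n : ℕ) (φ : ℝ → ℝ) (f : ℝ → ℝ) (x : ℝ) : ℝ :=
  (qInt q n + β) * ∑' k : ℕ, w q φ k x *
    jackson q (aNode q α β n k) (bNode q α β n k) (fun t => f (q ^ (1 - (k : ℤ)) * t))

/-- The moment identities (M) at `x` with parameter `m`. -/
def MomentM (q α β : ℝ) (n m : ℕ) (φ : ℝ → ℝ) (x : ℝ) : Prop :=
  Lop q α β n φ (fun _ => 1) x = 1 ∧
  Lop q α β n φ (fun t => t) x =
    qInt q n * x / (qInt q n + β) + q * (1 + 2 * α) / (qInt q 2 * (qInt q n + β)) ∧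
  Lop q α β n φ (fun t => t ^ 2) x =
    qInt q n * qInt q m * x ^ 2 / (q * (qInt q n + β) ^ 2)
      + qInt q n * (qInt q 3 + q * ((1 + 3 * α) * qInt q 2 + 1)) * x
          / (qInt q 3 * (qInt q n + β) ^ 2)
      + q ^ 2 * (1 + 3 * α + 3 * α ^ 2) / (qInt q 3 * (qInt q n + β) ^ 2)

/-- The quantity `δ_n(x)`. -/
def deltaN (q α β : ℝ) (n m : ℕ) (x : ℝ) : ℝ :=
  (qInt q n * qInt q m / (q * (qInt q n + β) ^ 2) + 1 - 2 * qInt q n / (qInt q n + β)) * x ^ 2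
  + (qInt q n * (qInt q 3 + q * ((1 + 3 * α) * qInt q 2 + 1))
        / (qInt q 3 * (qInt q n + β) ^ 2)
      - 2 * q * (1 + 2 * α) / (qInt q 2 * (qInt q n + β))) * x
  + q ^ 2 * (1 + 3 * α + 3 * α ^ 2) / (qInt q 3 * (qInt q n + β) ^ 2)

open scoped Classical in
/-- Statistical convergence of a real sequence. -/
def StatLim (x : ℕ → ℝ) (L : ℝ) : Prop :=
  ∀ ε > 0, Filter.Tendsto
    (fun n => (((Finset.range n).filter (fun j => ε ≤ |x j - L|)).card : ℝ) / n)
    Filter.atTop (nhds 0)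

open scoped Classical in
/-- Statistical convergence of a real double sequence. -/
def StatLim2 (x : ℕ → ℕ → ℝ) (L : ℝ) : Prop :=
  ∀ ε > 0, Filter.Tendsto
    (fun p : ℕ × ℕ =>
      (((Finset.range p.1 ×ˢ Finset.range p.2).filter
          (fun jk => ε ≤ |x jk.1 jk.2 - L|)).card : ℝ) / (p.1 * p.2))
    Filter.atTop (nhds 0)

/-- Condition (d) on a sequence `(q_n) ⊂ (0,1)`. -/
def CondD (q : ℕ → ℝ) : Prop :=
  StatLim q 1 ∧ (∃ a < (1 : ℝ), StatLim (fun n => q n ^ n) a) ∧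
    StatLim (fun n => 1 / qInt (q n) n) 0

/-- Modulus of continuity on `[0,∞)`. -/
def omegaMod (f : ℝ → ℝ) (δ : ℝ) : ℝ :=
  sSup {d | ∃ t s : ℝ, 0 ≤ t ∧ 0 ≤ s ∧ |t - s| ≤ δ ∧ d = |f t - f s|}

/-- Bivariate modulus of continuity on `[0,∞) × [0,∞)`. -/
def omegaMod2 (f : ℝ → ℝ → ℝ) (δ₁ δ₂ : ℝ) : ℝ :=
  sSup {d | ∃ x' y' x y : ℝ, 0 ≤ x' ∧ 0 ≤ y' ∧ 0 ≤ x ∧ 0 ≤ y ∧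
    |x' - x| ≤ δ₁ ∧ |y' - y| ≤ δ₂ ∧ d = |f x' y' - f x y|}

/-- The bivariate Stancu type `q`-Baskakov–Kantorovich operator. -/
def Lop2 (q₁ q₂ α β : ℝ) (n₁ n₂ : ℕ) (φ₁ φ₂ : ℝ → ℝ) (f : ℝ → ℝ → ℝ) (x y : ℝ) : ℝ :=
  (qInt q₁ n₁ + β) * (qInt q₂ n₂ + β) *
    ∑' k₁ : ℕ, ∑' k₂ : ℕ, w q₁ φ₁ k₁ x * w q₂ φ₂ k₂ y *
      jackson q₁ (aNode q₁ α β n₁ k₁) (bNode q₁ α β n₁ k₁) (fun t =>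
        jackson q₂ (aNode q₂ α β n₂ k₂) (bNode q₂ α β n₂ k₂) (fun s =>
          f (q₁ ^ (1 - (k₁ : ℤ)) * t) (q₂ ^ (1 - (k₂ : ℤ)) * s)))

set_option maxHeartbeats 1000000 in
private lemma keyJackson (q α β : ℝ) (hq0 : 0 < q) (hq1 : q < 1) (n : ℕ)
    (hD : qInt q n + β ≠ 0) (k : ℕ) :
    jackson q (aNode q α β n k) (bNode q α β n k)
        (fun t => ((q:ℝ) ^ (1 - (k:ℤ)) * t) ^ 2) =
      (1 / (1 + q + q ^ 2)) *
        ((1 + q + q ^ 2) / (qInt q n + β) *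
            ((qInt q k + q ^ ((k : ℤ) - 1) * α) / (q ^ ((k : ℤ) - 1) * (qInt q n + β))) ^ 2
          + (q * ((1 + 3 * α) * (1 + q) + 1) - 2 * α * (1 + q + q ^ 2)) / (qInt q n + β) ^ 2 *
            ((qInt q k + q ^ ((k : ℤ) - 1) * α) / (q ^ ((k : ℤ) - 1) * (qInt q n + β)))
          + (q ^ 2 * (1 + 3 * α + 3 * α ^ 2) - (1 + q + q ^ 2) * α ^ 2
              - (q * ((1 + 3 * α) * (1 + q) + 1) - 2 * α * (1 + q + q ^ 2)) * α)
              / (qInt q n + β) ^ 3) := by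
  have hq0' : (q:ℝ) ≠ 0 := hq0.ne'
  have hq1' : q ≠ 1 := hq1.ne
  have hq1'' : q - 1 ≠ 0 := sub_ne_zero.2 hq1'
  have h3ne : (1:ℝ) + q + q ^ 2 ≠ 0 := by positivity
  have hq3 : (1:ℝ) - q ^ 3 ≠ 0 := by
    have : q ^ 3 < 1 := pow_lt_one₀ hq0.le hq1 (by norm_num)
    linarith
  have hJ0 : ∀ (c : ℝ), jackson0 q c (fun t => ((q:ℝ) ^ (1 - (k:ℤ)) * t) ^ 2) =
      (1 - q) * ((q ^ (1 - (k:ℤ))) ^ 2 * c ^ 3 * (1 - q ^ 3)⁻¹) := by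
    intro c
    unfold jackson0
    rw [show (fun j : ℕ => q ^ j * ((q ^ (1 - (k:ℤ)) * (c * q ^ j)) ^ 2)) =
        fun j : ℕ => ((q ^ (1 - (k:ℤ))) ^ 2 * c ^ 2) * (q ^ 3) ^ j from funext fun j => by ring,
      tsum_mul_left,
      tsum_geometric_of_lt_one (by positivity) (pow_lt_one₀ hq0.le hq1 (by norm_num))]
    ring
  unfold jackson
  rw [hJ0, hJ0]
  unfold aNode bNode
  have hu : (q:ℝ) ^ k ≠ 0 := pow_ne_zero _ hq0'
  have e1 : (q:ℝ) ^ (1 - (k:ℤ)) = q / q ^ k := by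
    rw [zpow_sub₀ hq0', zpow_one, zpow_natCast]
  have e2 : (q:ℝ) ^ ((k:ℤ) - 1) = q ^ k / q := by
    rw [zpow_sub₀ hq0', zpow_one, zpow_natCast]
  have e3 : qInt q k = (q ^ k - 1) / (q - 1) := geom_sum_eq hq1' k
  have e4 : qInt q (k + 1) = (q ^ (k + 1) - 1) / (q - 1) := geom_sum_eq hq1' (k + 1)
  have e5 : (q:ℝ) ^ (k + 1) = q * q ^ k := by ring
  simp only [e1, e2, e3, e4, e5]
  rw [show (1:ℝ) - q ^ 3 = -((q - 1) * (1 + q + q ^ 2)) from by ring]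
  field_simp
  ring

set_option maxHeartbeats 1000000 in
theorem stmt6 (q α β : ℝ) (hq0 : 0 < q) (hq1 : q < 1) (hα : 0 ≤ α) (hαβ : α ≤ β)
    (n m : ℕ) (hn : 1 ≤ n) (hm : 1 ≤ m) (φ : ℝ → ℝ) (x : ℝ) (hx : 0 ≤ x)
    (hw : ∀ k, 0 ≤ w q φ k x)
    (hsum : HasSum (fun k => w q φ k x) 1)
    (hsum1 : HasSum
      (fun k => w q φ k x * ((qInt q k + q ^ ((k : ℤ) - 1) * α) /
        (q ^ ((k : ℤ) - 1) * (qInt q n + β))))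
      (qInt q n * x / (qInt q n + β) + α / (qInt q n + β)))
    (hsum2 : HasSum
      (fun k => w q φ k x * ((qInt q k + q ^ ((k : ℤ) - 1) * α) /
        (q ^ ((k : ℤ) - 1) * (qInt q n + β))) ^ 2)
      (qInt q n * qInt q m * x ^ 2 / (q * (qInt q n + β) ^ 2)
        + qInt q n * (2 * α + 1) * x / (qInt q n + β) ^ 2
        + α ^ 2 / (qInt q n + β) ^ 2)) :
    Lop q α β n φ (fun t => t ^ 2) x =
      qInt q n * qInt q m * x ^ 2 / (q * (qInt q n + β) ^ 2)
        + qInt q n * (qInt q 3 + q * ((1 + 3 * α) * qInt q 2 + 1)) * x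
            / (qInt q 3 * (qInt q n + β) ^ 2)
        + q ^ 2 * (1 + 3 * α + 3 * α ^ 2) / (qInt q 3 * (qInt q n + β) ^ 2) := by
  classical
  have hq0' : (q:ℝ) ≠ 0 := hq0.ne'
  have hNpos : 0 < qInt q n :=
    Finset.sum_pos (fun i _ => pow_pos hq0 i) (Finset.nonempty_range_iff.2 (by omega))
  have hβ : 0 ≤ β := hα.trans hαβ
  have hD : qInt q n + β ≠ 0 := by positivity
  have h3 : qInt q 3 = 1 + q + q ^ 2 := by
    simp [qInt, Finset.sum_range_succ]
  have h2 : qInt q 2 = 1 + q := by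
    simp [qInt, Finset.sum_range_succ]
  have h3ne : (1:ℝ) + q + q ^ 2 ≠ 0 := by positivity
  set D : ℝ := qInt q n + β with hDdef
  set T : ℕ → ℝ := fun k => (qInt q k + q ^ ((k : ℤ) - 1) * α) /
      (q ^ ((k : ℤ) - 1) * (qInt q n + β)) with hT
  set c1 : ℝ := q * ((1 + 3 * α) * (1 + q) + 1) - 2 * α * (1 + q + q ^ 2) with hc1
  set c0 : ℝ := q ^ 2 * (1 + 3 * α + 3 * α ^ 2) - (1 + q + q ^ 2) * α ^ 2 - c1 * α with hc0
  have hS : HasSum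
      (fun k => w q φ k x * ((1 / (1 + q + q ^ 2)) *
        ((1 + q + q ^ 2) / D * T k ^ 2 + c1 / D ^ 2 * T k + c0 / D ^ 3)))
      ((1 / (1 + q + q ^ 2)) *
        ((1 + q + q ^ 2) / D * (qInt q n * qInt q m * x ^ 2 / (q * (qInt q n + β) ^ 2)
            + qInt q n * (2 * α + 1) * x / (qInt q n + β) ^ 2
            + α ^ 2 / (qInt q n + β) ^ 2)
          + c1 / D ^ 2 * (qInt q n * x / (qInt q n + β) + α / (qInt q n + β))
          + c0 / D ^ 3 * 1)) := by
    have h2' := (hsum2.mul_left ((1 + q + q ^ 2) / D)).add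
      ((hsum1.mul_left (c1 / D ^ 2)).add (hsum.mul_left (c0 / D ^ 3)))
    have h2'' := h2'.mul_left (1 / (1 + q + q ^ 2))
    convert h2'' using 2 with k
    · rfl
    · rw [hT]; ring
    · ring
  have hfun : (fun k : ℕ => w q φ k x *
        jackson q (aNode q α β n k) (bNode q α β n k)
          (fun t => (fun t => t ^ 2) ((q:ℝ) ^ (1 - (k : ℤ)) * t))) =
      fun k => w q φ k x * ((1 / (1 + q + q ^ 2)) *
        ((1 + q + q ^ 2) / D * T k ^ 2 + c1 / D ^ 2 * T k + c0 / D ^ 3)) := by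
    funext k
    have := keyJackson q α β hq0 hq1 n hD k
    rw [hT, hc1, hc0, hDdef]
    rw [show (fun t : ℝ => (fun t : ℝ => t ^ 2) ((q:ℝ) ^ (1 - (k : ℤ)) * t)) =
      fun t : ℝ => ((q:ℝ) ^ (1 - (k : ℤ)) * t) ^ 2 from rfl, this]
  unfold Lop
  rw [hfun, hS.tsum_eq, h3, h2, hc0, hc1, hDdef]
  field_simp
  ring

end
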